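/- Kantorovich duality (finite case): for finite sets X, Y with probability vectors μ on X and ν on Y and a cost function c : X × Y → ℝ, the minimum of ∑ c(x,y) π(x,y) over all couplings π of μ and ν equals the maximum of ∑ φ(x) μ(x) + ∑ ψ(y) ν(y) over all functions φ : X → ℝ, ψ : Y → ℝ satisfying φ(x) + ψ(y) ≤ c(x,y) for all x, y. -/

import Mathlib

open Finset

section KDaux

variable {X Y : Type*} [Fintype X] [Fintype Y]

section aux

/-- weak duality -/
lemma kd_weak (μ : X → ℝ) (ν : Y → ℝ) (c : X → Y → ℝ) (p : X → Y → ℝ) (φ : X → ℝ) (ψ : Y → ℝ)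
    (hp0 : ∀ x y, 0 ≤ p x y) (hpX : ∀ x, ∑ y, p x y = μ x) (hpY : ∀ y, ∑ x, p x y = ν y)
    (hf : ∀ x y, φ x + ψ y ≤ c x y) :
    ∑ x, φ x * μ x + ∑ y, ψ y * ν y ≤ ∑ x, ∑ y, c x y * p x y := by
  have h1 : ∑ x, φ x * μ x = ∑ x, ∑ y, φ x * p x y := by
    refine Finset.sum_congr rfl fun x _ => ?_
    rw [← hpX x, Finset.mul_sum]
  have h2 : ∑ y, ψ y * ν y = ∑ x, ∑ y, ψ y * p x y := by
    rw [Finset.sum_comm]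
    refine Finset.sum_congr rfl fun y _ => ?_
    rw [← hpY y, Finset.mul_sum]
  rw [h1, h2, ← Finset.sum_add_distrib]
  refine Finset.sum_le_sum fun x _ => ?_
  rw [← Finset.sum_add_distrib]
  refine Finset.sum_le_sum fun y _ => ?_
  rw [← add_mul]
  exact mul_le_mul_of_nonneg_right (hf x y) (hp0 x y)

end aux

lemma kd_exists_min (μ : X → ℝ) (ν : Y → ℝ) (c : X → Y → ℝ)
    (hμ0 : ∀ x, 0 ≤ μ x) (hμ1 : ∑ x, μ x = 1)
    (hν0 : ∀ y, 0 ≤ ν y) (hν1 : ∑ y, ν y = 1) :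
    ∃ p : X → Y → ℝ,
      ((∀ x y, 0 ≤ p x y) ∧ (∀ x, ∑ y, p x y = μ x) ∧ (∀ y, ∑ x, p x y = ν y)) ∧
      ∀ p' : X → Y → ℝ,
        ((∀ x y, 0 ≤ p' x y) ∧ (∀ x, ∑ y, p' x y = μ x) ∧ (∀ y, ∑ x, p' x y = ν y)) →
        ∑ x, ∑ y, c x y * p x y ≤ ∑ x, ∑ y, c x y * p' x y := by
  set S : Set (X → Y → ℝ) :=
    {p | (∀ x y, 0 ≤ p x y) ∧ (∀ x, ∑ y, p x y = μ x) ∧ (∀ y, ∑ x, p x y = ν y)} with hS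
  have hc1 : ∀ (x : X) (y : Y), Continuous fun p : X → Y → ℝ => p x y :=
    fun x y => (continuous_apply y).comp (continuous_apply x)
  have hne : S.Nonempty := by
    refine ⟨fun x y => μ x * ν y, fun x y => mul_nonneg (hμ0 x) (hν0 y), fun x => ?_, fun y => ?_⟩
    · rw [← Finset.mul_sum, hν1, mul_one]
    · rw [← Finset.sum_mul, hμ1, one_mul]
  have hclosed : IsClosed S := by
    have : S = (⋂ x, ⋂ y, {p : X → Y → ℝ | 0 ≤ p x y}) ∩
        ((⋂ x, {p : X → Y → ℝ | ∑ y, p x y = μ x}) ∩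
         (⋂ y, {p : X → Y → ℝ | ∑ x, p x y = ν y})) := by
      ext p; simp [hS, Set.mem_iInter]
    rw [this]
    refine IsClosed.inter (isClosed_iInter fun x => isClosed_iInter fun y =>
      isClosed_le continuous_const (hc1 x y)) (IsClosed.inter ?_ ?_)
    · exact isClosed_iInter fun x =>
        isClosed_eq (continuous_finset_sum _ fun y _ => hc1 x y) continuous_const
    · exact isClosed_iInter fun y =>
        isClosed_eq (continuous_finset_sum _ fun x _ => hc1 x y) continuous_const
  have hcomp : IsCompact S := by
    refine IsCompact.of_isClosed_subset
      (isCompact_univ_pi fun x => isCompact_univ_pi fun y => (isCompact_Icc : IsCompact (Set.Icc (0:ℝ) 1)))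
      hclosed ?_
    intro p hp
    rw [Set.mem_univ_pi]
    intro x
    rw [Set.mem_univ_pi]
    intro y
    refine ⟨hp.1 x y, ?_⟩
    calc p x y ≤ ∑ y', p x y' :=
          Finset.single_le_sum (fun y' _ => hp.1 x y') (Finset.mem_univ y)
      _ = μ x := hp.2.1 x
      _ ≤ ∑ x', μ x' := Finset.single_le_sum (fun x' _ => hμ0 x') (Finset.mem_univ x)
      _ = 1 := hμ1
  have hcont : Continuous fun p : X → Y → ℝ => ∑ x, ∑ y, c x y * p x y :=
    continuous_finset_sum _ fun x _ => continuous_finset_sum _ fun y _ =>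
      (continuous_const.mul (hc1 x y))
  obtain ⟨p, hpS, hmin⟩ := hcomp.exists_isMinOn hne hcont.continuousOn
  exact ⟨p, hpS, fun p' hp' => hmin hp'⟩

lemma kd_approx (μ : X → ℝ) (ν : Y → ℝ) (c : X → Y → ℝ)
    (hμ1 : ∑ x, μ x = 1) (p : X → Y → ℝ)
    (hp : (∀ x y, 0 ≤ p x y) ∧ (∀ x, ∑ y, p x y = μ x) ∧ (∀ y, ∑ x, p x y = ν y))
    (hmin : ∀ p' : X → Y → ℝ,
      ((∀ x y, 0 ≤ p' x y) ∧ (∀ x, ∑ y, p' x y = μ x) ∧ (∀ y, ∑ x, p' x y = ν y)) →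
      ∑ x, ∑ y, c x y * p x y ≤ ∑ x, ∑ y, c x y * p' x y)
    (t : ℝ) (ht : 0 < t) :
    ∃ (φ : X → ℝ) (ψ : Y → ℝ), (∀ x y, φ x + ψ y ≤ c x y) ∧
      (∑ x, ∑ y, c x y * p x y) - t < ∑ x, φ x * μ x + ∑ y, ψ y * ν y := by
  classical
  set m : ℝ := ∑ x, ∑ y, c x y * p x y with hm
  let δX : X → (X → ℝ) := fun x x' => if x' = x then 1 else 0
  let δY : Y → (Y → ℝ) := fun y y' => if y' = y then 1 else 0
  let g : X × Y → (X → ℝ) × (Y → ℝ) × ℝ := fun z => (δX z.1, δY z.2, c z.1 z.2)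
  have hnot : ((μ, ν, m - t) : (X → ℝ) × (Y → ℝ) × ℝ) ∉ convexHull ℝ (Set.range g) := by
    intro hmem
    rw [mem_convexHull_iff_exists_fintype] at hmem
    obtain ⟨ι, hι, w, z, hw0, hw1, hzr, hsum⟩ := hmem
    choose h hh using fun i => (hzr i : z i ∈ Set.range g)
    have h1 : ∀ x, ∑ i, (if (h i).1 = x then w i else 0) = μ x := by
      intro x
      have e := congrFun (congrArg Prod.fst hsum) x
      simp only [Prod.fst_sum, Finset.sum_apply] at e
      rw [← e]
      refine Finset.sum_congr rfl fun i _ => ?_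
      rw [← hh i]
      simp only [g, δX, Prod.smul_fst, Pi.smul_apply, smul_eq_mul, mul_ite, mul_one, mul_zero]
      simp [eq_comm]
    have h2 : ∀ y, ∑ i, (if (h i).2 = y then w i else 0) = ν y := by
      intro y
      have e := congrFun (congrArg (fun v => v.2.1) hsum) y
      simp only [Prod.snd_sum, Prod.fst_sum, Finset.sum_apply] at e
      rw [← e]
      refine Finset.sum_congr rfl fun i _ => ?_
      rw [← hh i]
      simp only [g, δY, Prod.smul_snd, Prod.smul_fst, Pi.smul_apply, smul_eq_mul, mul_ite,
        mul_one, mul_zero]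
      simp [eq_comm]
    have h3 : ∑ i, w i * c (h i).1 (h i).2 = m - t := by
      have e := congrArg (fun v : (X → ℝ) × (Y → ℝ) × ℝ => v.2.2) hsum
      simp only [Prod.snd_sum, Finset.sum_apply] at e
      rw [← e]
      refine Finset.sum_congr rfl fun i _ => ?_
      rw [← hh i]
      simp [g]
    set q : X → Y → ℝ := fun x y => ∑ i, if h i = (x, y) then w i else 0 with hq
    have hiqx : ∀ (i : ι) (x : X), ∑ y, (if h i = (x, y) then w i else 0) =
        if (h i).1 = x then w i else 0 := by
      intro i x
      by_cases hx : (h i).1 = x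
      · simp [Prod.ext_iff, hx, Finset.sum_ite_eq]
      · simp [Prod.ext_iff, hx]
    have hiqy : ∀ (i : ι) (y : Y), ∑ x, (if h i = (x, y) then w i else 0) =
        if (h i).2 = y then w i else 0 := by
      intro i y
      by_cases hy : (h i).2 = y
      · simp [Prod.ext_iff, hy, Finset.sum_ite_eq]
      · simp [Prod.ext_iff, hy]
    have hqc : (∀ x y, 0 ≤ q x y) ∧ (∀ x, ∑ y, q x y = μ x) ∧ (∀ y, ∑ x, q x y = ν y) := by
      refine ⟨fun x y => Finset.sum_nonneg fun i _ => ?_, fun x => ?_, fun y => ?_⟩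
      · split <;> simp [hw0 i]
      · rw [Finset.sum_comm]
        calc ∑ i, ∑ y, (if h i = (x, y) then w i else 0)
            = ∑ i, (if (h i).1 = x then w i else 0) :=
              Finset.sum_congr rfl fun i _ => hiqx i x
          _ = μ x := h1 x
      · rw [Finset.sum_comm]
        calc ∑ i, ∑ x, (if h i = (x, y) then w i else 0)
            = ∑ i, (if (h i).2 = y then w i else 0) :=
              Finset.sum_congr rfl fun i _ => hiqy i y
          _ = ν y := h2 y
    have hgen : ∀ (i : ι) (x : X) (r : ℝ), ∑ y, (if h i = (x, y) then r else 0) =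
        if (h i).1 = x then r else 0 := by
      intro i x r
      by_cases hx : (h i).1 = x
      · simp [Prod.ext_iff, hx, Finset.sum_ite_eq]
      · simp [Prod.ext_iff, hx]
    have hqcost : ∑ x, ∑ y, c x y * q x y = m - t := by
      rw [← h3]
      have e1 : ∀ x y, c x y * q x y =
          ∑ i, (if h i = (x, y) then w i * c (h i).1 (h i).2 else 0) := by
        intro x y
        rw [hq, Finset.mul_sum]
        refine Finset.sum_congr rfl fun i _ => ?_
        split
        · rename_i hi; rw [hi]; ring
        · ring
      simp only [e1]
      have e2 : ∀ x : X, (∑ y, ∑ i, if h i = (x, y) then w i * c (h i).1 (h i).2 else 0)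
          = ∑ i, ∑ y, (if h i = (x, y) then w i * c (h i).1 (h i).2 else 0) := fun x =>
        Finset.sum_comm
      simp only [e2, hgen]
      rw [Finset.sum_comm]
      refine Finset.sum_congr rfl fun i _ => ?_
      simp [Finset.sum_ite_eq]
    have := hmin q hqc
    rw [hqcost] at this
    linarith
  -- separation
  have hcl : IsClosed (convexHull ℝ (Set.range g)) :=
    ((Set.finite_range g).isCompact_convexHull (𝕜 := ℝ)).isClosed
  obtain ⟨f, u, hlt, hgt⟩ :=
    geometric_hahn_banach_closed_point (convex_convexHull ℝ (Set.range g)) hcl hnot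
  set A : X → ℝ := fun x => f (δX x, 0, 0) with hA
  set B : Y → ℝ := fun y => f (0, δY y, 0) with hB
  set α : ℝ := f (0, 0, 1) with hα
  have hmk : ∀ a b : (X → ℝ) × (Y → ℝ) × ℝ, a.1 = b.1 → a.2.1 = b.2.1 → a.2.2 = b.2.2 → a = b :=
    fun a b h1 h2 h3 => Prod.ext h1 (Prod.ext h2 h3)
  have hg_decomp : ∀ x y, g (x, y) =
      ((δX x, 0, 0) : (X → ℝ) × (Y → ℝ) × ℝ) + (0, δY y, 0) + (c x y) • (0, 0, 1) := by
    intro x y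
    refine hmk _ _ ?_ ?_ ?_ <;> simp [g]
  have hfg : ∀ x y, f (g (x, y)) = A x + B y + c x y * α := by
    intro x y
    rw [hg_decomp x y, map_add, map_add, map_smul]
    simp [hA, hB, hα, smul_eq_mul]
  have hdecomp2 : ∀ r : ℝ, ((μ, ν, r) : (X → ℝ) × (Y → ℝ) × ℝ) =
      (∑ x, μ x • ((δX x, 0, 0) : (X → ℝ) × (Y → ℝ) × ℝ)) +
      (∑ y, ν y • ((0, δY y, 0) : (X → ℝ) × (Y → ℝ) × ℝ)) + r • (0, 0, 1) := by
    intro r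
    refine hmk _ _ ?_ ?_ ?_
    · simp only [Prod.fst_add, Prod.fst_sum, Prod.smul_fst, Prod.smul_snd]
      funext x'
      simp only [Pi.add_apply, Finset.sum_apply, Pi.smul_apply, smul_eq_mul]
      simp [δX, mul_ite, Finset.sum_ite_eq]
    · simp only [Prod.snd_add, Prod.fst_add, Prod.snd_sum, Prod.fst_sum, Prod.smul_fst,
        Prod.smul_snd]
      funext y'
      simp only [Pi.add_apply, Finset.sum_apply, Pi.smul_apply, smul_eq_mul]
      simp [δY, mul_ite, Finset.sum_ite_eq]
    · simp only [Prod.snd_add, Prod.snd_sum, Prod.smul_snd]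
      simp
  have hfμν : ∀ r : ℝ, f (μ, ν, r) = ∑ x, μ x * A x + ∑ y, ν y * B y + r * α := by
    intro r
    rw [hdecomp2 r, map_add, map_add, map_sum, map_sum, map_smul]
    simp only [map_smul, smul_eq_mul]
    rfl
  have hrep : ((μ, ν, m) : (X → ℝ) × (Y → ℝ) × ℝ) = ∑ x, ∑ y, p x y • g (x, y) := by
    refine hmk _ _ ?_ ?_ ?_
    · simp only [Prod.fst_sum, Prod.smul_fst]
      funext x'
      simp only [Finset.sum_apply, Pi.smul_apply, smul_eq_mul]
      have : ∀ x : X, ∑ y, p x y * (δX x x' : ℝ) = (if x' = x then μ x else 0) := by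
        intro x
        rw [← Finset.sum_mul, hp.2.1 x]
        simp [δX, mul_ite, mul_comm]
      symm
      calc ∑ x, ∑ y, p x y * δX x x' = ∑ x, (if x' = x then μ x else 0) :=
            Finset.sum_congr rfl fun x _ => this x
        _ = μ x' := by simp [Finset.sum_ite_eq]
    · simp only [Prod.snd_sum, Prod.fst_sum, Prod.smul_snd, Prod.smul_fst]
      funext y'
      simp only [Finset.sum_apply, Pi.smul_apply, smul_eq_mul]
      rw [Finset.sum_comm]
      have : ∀ y : Y, ∑ x, p x y * (δY y y' : ℝ) = (if y' = y then ν y else 0) := by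
        intro y
        rw [← Finset.sum_mul, hp.2.2 y]
        simp [δY, mul_ite, mul_comm]
      symm
      calc ∑ y, ∑ x, p x y * δY y y' = ∑ y, (if y' = y then ν y else 0) :=
            Finset.sum_congr rfl fun y _ => this y
        _ = ν y' := by simp [Finset.sum_ite_eq]
    · simp only [Prod.snd_sum, Prod.smul_snd, smul_eq_mul]
      rw [hm]
      exact Finset.sum_congr rfl fun x _ => Finset.sum_congr rfl fun y _ => by
        simp [g, mul_comm]
  have hopt : f (μ, ν, m) ≤ u := by
    rw [hrep, map_sum]
    have e : ∀ x : X, f (∑ y, p x y • g (x, y)) = ∑ y, p x y * f (g (x, y)) := by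
      intro x; rw [map_sum]; exact Finset.sum_congr rfl fun y _ => by rw [map_smul]; rfl
    simp only [e]
    calc ∑ x, ∑ y, p x y * f (g (x, y)) ≤ ∑ x, ∑ y, p x y * u := by
          refine Finset.sum_le_sum fun x _ => Finset.sum_le_sum fun y _ => ?_
          exact mul_le_mul_of_nonneg_left
            (le_of_lt (hlt (g (x, y)) (subset_convexHull ℝ _ ⟨(x, y), rfl⟩))) (hp.1 x y)
      _ = u := by
          have hp1 : ∑ x, ∑ y, p x y = 1 := by
            rw [Finset.sum_congr rfl fun x _ => hp.2.1 x, hμ1]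
          simp only [← Finset.sum_mul]
          rw [hp1, one_mul]
  have hSm : ∑ x, μ x * A x + ∑ y, ν y * B y + m * α ≤ u := by rw [← hfμν m]; exact hopt
  have hgt' : u < ∑ x, μ x * A x + ∑ y, ν y * B y + (m - t) * α := by rw [← hfμν (m - t)]; exact hgt
  have hαneg : α < 0 := by nlinarith
  have hβ : 0 < -α := by linarith
  refine ⟨fun x => (A x - u) / (-α), fun y => B y / (-α), ?_, ?_⟩
  · intro x y
    have hf := hlt (g (x, y)) (subset_convexHull ℝ _ ⟨(x, y), rfl⟩)
    rw [hfg x y] at hf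
    rw [← add_div, div_le_iff₀ hβ]
    nlinarith
  · have e1 : ∑ x, ((A x - u) / (-α)) * μ x = (∑ x, μ x * A x - u) / (-α) := by
      simp only [div_mul_eq_mul_div]
      rw [← Finset.sum_div]
      congr 1
      have e : ∀ x : X, (A x - u) * μ x = μ x * A x - u * μ x := fun x => by ring
      rw [Finset.sum_congr rfl fun x _ => e x, Finset.sum_sub_distrib, ← Finset.mul_sum, hμ1,
        mul_one]
    have e2 : ∑ y, (B y / (-α)) * ν y = (∑ y, ν y * B y) / (-α) := by
      simp only [div_mul_eq_mul_div]
      rw [← Finset.sum_div]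
      congr 1
      exact Finset.sum_congr rfl fun y _ => by ring
    rw [e1, e2, ← add_div, lt_div_iff₀ hβ]
    have hr : (m - t) * α = -((m - t) * (-α)) := by ring
    linarith

lemma kd_normalize [Nonempty X] [Nonempty Y] (μ : X → ℝ) (ν : Y → ℝ) (c : X → Y → ℝ)
    (hμ0 : ∀ x, 0 ≤ μ x) (hμ1 : ∑ x, μ x = 1)
    (hν0 : ∀ y, 0 ≤ ν y) (hν1 : ∑ y, ν y = 1)
    (C : ℝ) (hC : ∀ x y, |c x y| ≤ C)
    (φ : X → ℝ) (ψ : Y → ℝ) (hfeas : ∀ x y, φ x + ψ y ≤ c x y) :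
    ∃ (φ₂ : X → ℝ) (ψ₂ : Y → ℝ), (∀ x y, φ₂ x + ψ₂ y ≤ c x y) ∧
      (∀ x, |φ₂ x| ≤ 3 * C) ∧ (∀ y, |ψ₂ y| ≤ 2 * C) ∧
      ∑ x, φ x * μ x + ∑ y, ψ y * ν y ≤ ∑ x, φ₂ x * μ x + ∑ y, ψ₂ y * ν y := by
  classical
  have hX : (Finset.univ : Finset X).Nonempty := Finset.univ_nonempty
  have hY : (Finset.univ : Finset Y).Nonempty := Finset.univ_nonempty
  set ψ₁ : Y → ℝ := fun y => Finset.univ.inf' hX (fun x => c x y - φ x) with hψ₁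
  have hψle : ∀ y, ψ y ≤ ψ₁ y := fun y =>
    Finset.le_inf' hX _ fun x _ => by linarith [hfeas x y]
  have hfeas1 : ∀ x y, φ x + ψ₁ y ≤ c x y := fun x y => by
    have := Finset.inf'_le (fun x => c x y - φ x) (Finset.mem_univ x)
    linarith
  set φ₁ : X → ℝ := fun x => Finset.univ.inf' hY (fun y => c x y - ψ₁ y) with hφ₁
  have hφle : ∀ x, φ x ≤ φ₁ x := fun x =>
    Finset.le_inf' hY _ fun y _ => by linarith [hfeas1 x y]
  have hfeas2 : ∀ x y, φ₁ x + ψ₁ y ≤ c x y := fun x y => by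
    have := Finset.inf'_le (fun y => c x y - ψ₁ y) (Finset.mem_univ y)
    linarith
  obtain ⟨y₀⟩ := ‹Nonempty Y›
  set k : ℝ := ψ₁ y₀ with hk
  refine ⟨fun x => φ₁ x + k, fun y => ψ₁ y - k, fun x y => by have := hfeas2 x y; dsimp only; linarith, ?_, ?_, ?_⟩
  · -- |φ₁ x + k| ≤ 3C
    intro x
    obtain ⟨y', _, hy'⟩ := Finset.exists_mem_eq_inf' hY (fun y => c x y - ψ₁ y)
    have hφx : φ₁ x = c x y' - ψ₁ y' := hy'
    -- bounds on ψ₁ y' - k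
    have hub : ψ₁ y' - k ≤ 2 * C := by
      obtain ⟨x₀, _, hx₀⟩ := Finset.exists_mem_eq_inf' hX (fun x => c x y₀ - φ x)
      have h1 : ψ₁ y' ≤ c x₀ y' - φ x₀ := Finset.inf'_le _ (Finset.mem_univ x₀)
      have h2 : k = c x₀ y₀ - φ x₀ := hx₀
      have := abs_le.1 (hC x₀ y'); have := abs_le.1 (hC x₀ y₀)
      linarith
    have hlb : -(2 * C) ≤ ψ₁ y' - k := by
      obtain ⟨x₁, _, hx₁⟩ := Finset.exists_mem_eq_inf' hX (fun x => c x y' - φ x)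
      have h1 : k ≤ c x₁ y₀ - φ x₁ := Finset.inf'_le _ (Finset.mem_univ x₁)
      have h2 : ψ₁ y' = c x₁ y' - φ x₁ := hx₁
      have := abs_le.1 (hC x₁ y₀); have := abs_le.1 (hC x₁ y')
      linarith
    have := abs_le.1 (hC x y')
    dsimp only
    rw [abs_le]
    constructor <;> nlinarith
  · -- |ψ₁ y - k| ≤ 2C
    intro y
    dsimp only
    rw [abs_le]
    constructor
    · obtain ⟨x₁, _, hx₁⟩ := Finset.exists_mem_eq_inf' hX (fun x => c x y - φ x)
      have h1 : k ≤ c x₁ y₀ - φ x₁ := Finset.inf'_le _ (Finset.mem_univ x₁)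
      have h2 : ψ₁ y = c x₁ y - φ x₁ := hx₁
      have := abs_le.1 (hC x₁ y₀); have := abs_le.1 (hC x₁ y)
      linarith
    · obtain ⟨x₀, _, hx₀⟩ := Finset.exists_mem_eq_inf' hX (fun x => c x y₀ - φ x)
      have h1 : ψ₁ y ≤ c x₀ y - φ x₀ := Finset.inf'_le _ (Finset.mem_univ x₀)
      have h2 : k = c x₀ y₀ - φ x₀ := hx₀
      have := abs_le.1 (hC x₀ y); have := abs_le.1 (hC x₀ y₀)
      linarith
  · -- value increases
    have e1 : ∑ x, (φ₁ x + k) * μ x = ∑ x, φ₁ x * μ x + k := by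
      have : ∀ x : X, (φ₁ x + k) * μ x = φ₁ x * μ x + k * μ x := fun x => by ring
      rw [Finset.sum_congr rfl fun x _ => this x, Finset.sum_add_distrib, ← Finset.mul_sum,
        hμ1, mul_one]
    have e2 : ∑ y, (ψ₁ y - k) * ν y = ∑ y, ψ₁ y * ν y - k := by
      have : ∀ y : Y, (ψ₁ y - k) * ν y = ψ₁ y * ν y - k * ν y := fun y => by ring
      rw [Finset.sum_congr rfl fun y _ => this y, Finset.sum_sub_distrib, ← Finset.mul_sum,
        hν1, mul_one]
    rw [e1, e2]
    have h1 : ∑ x, φ x * μ x ≤ ∑ x, φ₁ x * μ x :=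
      Finset.sum_le_sum fun x _ => mul_le_mul_of_nonneg_right (hφle x) (hμ0 x)
    have h2 : ∑ y, ψ y * ν y ≤ ∑ y, ψ₁ y * ν y :=
      Finset.sum_le_sum fun y _ => mul_le_mul_of_nonneg_right (hψle y) (hν0 y)
    linarith

lemma kd_dual_opt [Nonempty X] [Nonempty Y] (μ : X → ℝ) (ν : Y → ℝ) (c : X → Y → ℝ)
    (hμ0 : ∀ x, 0 ≤ μ x) (hμ1 : ∑ x, μ x = 1)
    (hν0 : ∀ y, 0 ≤ ν y) (hν1 : ∑ y, ν y = 1)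
    (C : ℝ) (hC : ∀ x y, |c x y| ≤ C)
    (hnorm : ∀ (φ : X → ℝ) (ψ : Y → ℝ), (∀ x y, φ x + ψ y ≤ c x y) →
      ∃ (φ₂ : X → ℝ) (ψ₂ : Y → ℝ), (∀ x y, φ₂ x + ψ₂ y ≤ c x y) ∧
      (∀ x, |φ₂ x| ≤ 3 * C) ∧ (∀ y, |ψ₂ y| ≤ 2 * C) ∧
      ∑ x, φ x * μ x + ∑ y, ψ y * ν y ≤ ∑ x, φ₂ x * μ x + ∑ y, ψ₂ y * ν y) :
    ∃ (φ₀ : X → ℝ) (ψ₀ : Y → ℝ), (∀ x y, φ₀ x + ψ₀ y ≤ c x y) ∧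
      ∀ (φ' : X → ℝ) (ψ' : Y → ℝ), (∀ x y, φ' x + ψ' y ≤ c x y) →
        ∑ x, φ' x * μ x + ∑ y, ψ' y * ν y ≤ ∑ x, φ₀ x * μ x + ∑ y, ψ₀ y * ν y := by
  classical
  have hX : (Finset.univ : Finset X).Nonempty := Finset.univ_nonempty
  set D : Set ((X → ℝ) × (Y → ℝ)) :=
    {q | (∀ x y, q.1 x + q.2 y ≤ c x y) ∧ (∀ x, |q.1 x| ≤ 3 * C) ∧ (∀ y, |q.2 y| ≤ 2 * C)}
    with hD
  have hcf : ∀ x : X, Continuous fun q : (X → ℝ) × (Y → ℝ) => q.1 x :=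
    fun x => (continuous_apply x).comp continuous_fst
  have hcs : ∀ y : Y, Continuous fun q : (X → ℝ) × (Y → ℝ) => q.2 y :=
    fun y => (continuous_apply y).comp continuous_snd
  have hclosed : IsClosed D := by
    have : D = (⋂ x, ⋂ y, {q : (X → ℝ) × (Y → ℝ) | q.1 x + q.2 y ≤ c x y}) ∩
        ((⋂ x, {q : (X → ℝ) × (Y → ℝ) | |q.1 x| ≤ 3 * C}) ∩
         (⋂ y, {q : (X → ℝ) × (Y → ℝ) | |q.2 y| ≤ 2 * C})) := by
      ext q; simp [hD, Set.mem_iInter]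
    rw [this]
    refine IsClosed.inter (isClosed_iInter fun x => isClosed_iInter fun y =>
      isClosed_le ((hcf x).add (hcs y)) continuous_const) (IsClosed.inter ?_ ?_)
    · exact isClosed_iInter fun x => isClosed_le (hcf x).abs continuous_const
    · exact isClosed_iInter fun y => isClosed_le (hcs y).abs continuous_const
  have hcomp : IsCompact D := by
    refine IsCompact.of_isClosed_subset
      (IsCompact.prod
        (isCompact_univ_pi fun _ => (isCompact_Icc : IsCompact (Set.Icc (-(3*C)) (3*C))))
        (isCompact_univ_pi fun _ => (isCompact_Icc : IsCompact (Set.Icc (-(2*C)) (2*C)))))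
      hclosed ?_
    rintro q ⟨h1, h2, h3⟩
    refine Set.mem_prod.2 ⟨?_, ?_⟩
    · rw [Set.mem_univ_pi]; intro x; exact abs_le.1 (h2 x)
    · rw [Set.mem_univ_pi]; intro y; exact abs_le.1 (h3 y)
  have hne : D.Nonempty := by
    obtain ⟨φ₂, ψ₂, hf, hb1, hb2, _⟩ :=
      hnorm (fun _ => 0) (fun y => Finset.univ.inf' hX fun x => c x y)
        (fun x y => by
          have := Finset.inf'_le (fun x => c x y) (Finset.mem_univ x)
          linarith)
    exact ⟨(φ₂, ψ₂), hf, hb1, hb2⟩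
  have hcont : Continuous fun q : (X → ℝ) × (Y → ℝ) =>
      ∑ x, q.1 x * μ x + ∑ y, q.2 y * ν y :=
    ((continuous_finset_sum _ fun x _ => (hcf x).mul continuous_const).add
      (continuous_finset_sum _ fun y _ => (hcs y).mul continuous_const))
  obtain ⟨q₀, hq₀D, hmax⟩ := hcomp.exists_isMaxOn hne hcont.continuousOn
  refine ⟨q₀.1, q₀.2, hq₀D.1, ?_⟩
  intro φ' ψ' hf'
  obtain ⟨φ₂, ψ₂, hf2, hb1, hb2, hval⟩ := hnorm φ' ψ' hf'
  exact le_trans hval (hmax (⟨hf2, hb1, hb2⟩ : (φ₂, ψ₂) ∈ D))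

end KDaux

/-- Kantorovich duality in the finite case: the minimal transport cost over
couplings of μ and ν equals the maximal value of the dual potentials. -/
theorem kantorovich_duality_finite {X Y : Type*} [Fintype X] [Fintype Y]
    (μ : X → ℝ) (ν : Y → ℝ) (c : X → Y → ℝ)
    (hμ0 : ∀ x, 0 ≤ μ x) (hμ1 : ∑ x, μ x = 1)
    (hν0 : ∀ y, 0 ≤ ν y) (hν1 : ∑ y, ν y = 1) :
    ∃ (π : X → Y → ℝ) (φ : X → ℝ) (ψ : Y → ℝ),
      ((∀ x y, 0 ≤ π x y) ∧ (∀ x, ∑ y, π x y = μ x) ∧ (∀ y, ∑ x, π x y = ν y)) ∧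
      (∀ x y, φ x + ψ y ≤ c x y) ∧
      (∀ π' : X → Y → ℝ,
        ((∀ x y, 0 ≤ π' x y) ∧ (∀ x, ∑ y, π' x y = μ x) ∧ (∀ y, ∑ x, π' x y = ν y)) →
        ∑ x, ∑ y, c x y * π x y ≤ ∑ x, ∑ y, c x y * π' x y) ∧
      (∀ (φ' : X → ℝ) (ψ' : Y → ℝ), (∀ x y, φ' x + ψ' y ≤ c x y) →
        ∑ x, φ' x * μ x + ∑ y, ψ' y * ν y ≤ ∑ x, φ x * μ x + ∑ y, ψ y * ν y) ∧
      ∑ x, ∑ y, c x y * π x y = ∑ x, φ x * μ x + ∑ y, ψ y * ν y := by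
  classical
  obtain ⟨p, hp, hmin⟩ := kd_exists_min μ ν c hμ0 hμ1 hν0 hν1
  haveI hXne : Nonempty X := by
    by_contra h
    rw [not_nonempty_iff] at h
    rw [Finset.univ_eq_empty, Finset.sum_empty] at hμ1
    exact zero_ne_one hμ1
  haveI hYne : Nonempty Y := by
    by_contra h
    rw [not_nonempty_iff] at h
    rw [Finset.univ_eq_empty, Finset.sum_empty] at hν1
    exact zero_ne_one hν1
  set C : ℝ := (Finset.univ : Finset (X × Y)).sup' Finset.univ_nonempty
    (fun z => |c z.1 z.2|) with hCdef
  have hC : ∀ x y, |c x y| ≤ C := fun x y =>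
    Finset.le_sup' (fun z : X × Y => |c z.1 z.2|) (Finset.mem_univ (x, y))
  obtain ⟨φ₀, ψ₀, hfeas0, hopt⟩ := kd_dual_opt μ ν c hμ0 hμ1 hν0 hν1 C hC
    (fun φ ψ hf => kd_normalize μ ν c hμ0 hμ1 hν0 hν1 C hC φ ψ hf)
  have hle : ∑ x, φ₀ x * μ x + ∑ y, ψ₀ y * ν y ≤ ∑ x, ∑ y, c x y * p x y :=
    kd_weak μ ν c p φ₀ ψ₀ hp.1 hp.2.1 hp.2.2 hfeas0
  have hge : ∑ x, ∑ y, c x y * p x y ≤ ∑ x, φ₀ x * μ x + ∑ y, ψ₀ y * ν y := by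
    by_contra h
    push_neg at h
    obtain ⟨φ, ψ, hf, hv⟩ := kd_approx μ ν c hμ1 p hp hmin
      ((∑ x, ∑ y, c x y * p x y) - (∑ x, φ₀ x * μ x + ∑ y, ψ₀ y * ν y)) (by linarith)
    have := hopt φ ψ hf
    linarith
  exact ⟨p, φ₀, ψ₀, hp, hfeas0, hmin, hopt, le_antisymm hge hle⟩
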